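/- Let B be a unital C*-algebra with unit 1, and let J be a norm-closed subalgebra of B which has no identity element and which possesses a left contractive approximate identity. Then J has a left approximate identity (u_t) (that is, u_t x → x in norm for all x ∈ J) such that lim_t ‖u_t‖ = 1 and lim_t ‖1 − u_t‖ = 1. -/

import Mathlib

open Filter Topology

/-- `D` has a contractive (two-sided) approximate identity: a net in the closed unit
ball of `D` with `e_t * x → x` and `x * e_t → x` for every `x ∈ D`. -/
def HasCai {B : Type*} [NonUnitalNormedRing B] (D : Set B) : Prop :=
  ∃ (ι : Type) (_ : Preorder ι) (_ : IsDirected ι (· ≤ ·)) (_ : Nonempty ι) (e : ι → B),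
    (∀ t, e t ∈ D) ∧ (∀ t, ‖e t‖ ≤ 1) ∧
    ∀ x ∈ D, Tendsto (fun t => e t * x) atTop (𝓝 x) ∧ Tendsto (fun t => x * e t) atTop (𝓝 x)

/-- `D` has a left contractive approximate identity. -/
def HasLeftCai {B : Type*} [NonUnitalNormedRing B] (D : Set B) : Prop :=
  ∃ (ι : Type) (_ : Preorder ι) (_ : IsDirected ι (· ≤ ·)) (_ : Nonempty ι) (e : ι → B),
    (∀ t, e t ∈ D) ∧ (∀ t, ‖e t‖ ≤ 1) ∧
    ∀ x ∈ D, Tendsto (fun t => e t * x) atTop (𝓝 x)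

/-- A norm-closed (non-unital) subalgebra, described as a subset. -/
def IsClosedSubalg {B : Type*} [NonUnitalNormedRing B] [Module ℂ B] (A : Set B) : Prop :=
  IsClosed A ∧ (0 : B) ∈ A ∧ (∀ x ∈ A, ∀ y ∈ A, x + y ∈ A) ∧
    (∀ (c : ℂ), ∀ x ∈ A, c • x ∈ A) ∧ ∀ x ∈ A, ∀ y ∈ A, x * y ∈ A

/-- A hereditary subalgebra of `A`: a norm-closed subalgebra `D ⊆ A` with
`D A D ⊆ D` possessing a contractive approximate identity. -/
def IsHSA {B : Type*} [NonUnitalNormedRing B] [Module ℂ B] (A D : Set B) : Prop :=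
  IsClosedSubalg D ∧ D ⊆ A ∧ (∀ d₁ ∈ D, ∀ a ∈ A, ∀ d₂ ∈ D, d₁ * a * d₂ ∈ D) ∧ HasCai D

/-- An r-ideal of `A`: a norm-closed right ideal of `A` possessing a left
contractive approximate identity. -/
def IsRIdeal {B : Type*} [NonUnitalNormedRing B] [Module ℂ B] (A J : Set B) : Prop :=
  IsClosed J ∧ J ⊆ A ∧ (0 : B) ∈ J ∧ (∀ x ∈ J, ∀ y ∈ J, x + y ∈ J) ∧
    (∀ (c : ℂ), ∀ x ∈ J, c • x ∈ J) ∧ (∀ x ∈ J, ∀ a ∈ A, x * a ∈ J) ∧ HasLeftCai J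

/-- `XY`: the norm-closure of the linear span of products `x * y`, `x ∈ X`, `y ∈ Y`. -/
def prodSet {B : Type*} [NonUnitalNormedRing B] [Module ℂ B] (X Y : Set B) : Set B :=
  closure (Submodule.span ℂ {z : B | ∃ x ∈ X, ∃ y ∈ Y, z = x * y} : Set B)

section Aux

variable {B : Type*} [CStarAlgebra B]

lemma real_smul_mem {J : Set B} (hJ : IsClosedSubalg J) {x : B} (hx : x ∈ J) (r : ℝ) :
    r • x ∈ J := by
  have : ((r : ℂ)) • x ∈ J := hJ.2.2.2.1 _ _ hx
  rwa [Complex.coe_smul] at this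

lemma pow_mem_subalg {J : Set B} (hJ : IsClosedSubalg J) {e : B} (he : e ∈ J) :
    ∀ n : ℕ, e ^ (n + 1) ∈ J := by
  intro n
  induction n with
  | zero => simpa using he
  | succ n ih => rw [pow_succ]; exact hJ.2.2.2.2 _ ih _ he

lemma smul_nonneg'' [PartialOrder B] [StarOrderedRing B] {r : ℝ} (hr : 0 ≤ r) {x : B}
    (hx : 0 ≤ x) : 0 ≤ r • x := by
  have hc : star (algebraMap ℝ B (Real.sqrt r)) = algebraMap ℝ B (Real.sqrt r) := by
    simp [Algebra.algebraMap_eq_smul_one, star_smul]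
  have h := star_left_conjugate_nonneg hx (algebraMap ℝ B (Real.sqrt r))
  rw [hc] at h
  have key : algebraMap ℝ B (Real.sqrt r) * x * algebraMap ℝ B (Real.sqrt r) = r • x := by
    rw [← Algebra.smul_def, ← Algebra.commutes (Real.sqrt r) (Real.sqrt r • x),
      ← Algebra.smul_def, smul_smul, Real.mul_self_sqrt hr]
  rwa [key] at h

lemma two_sub_add_star_nonneg [PartialOrder B] [StarOrderedRing B] {e : B} (he : ‖e‖ ≤ 1) :
    0 ≤ (2 : B) - (e + star e) := by
  have ha : IsSelfAdjoint (e + star e) := by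
    simp [IsSelfAdjoint, star_add, add_comm]
  have h1 : e + star e ≤ algebraMap ℝ B ‖e + star e‖ := ha.le_algebraMap_norm_self
  have h2 : ‖e + star e‖ ≤ 2 := le_trans (norm_add_le _ _) (by rw [norm_star]; linarith)
  have hone : (0 : B) ≤ 1 := by simpa using star_mul_self_nonneg (1 : B)
  have h3 : algebraMap ℝ B ‖e + star e‖ ≤ algebraMap ℝ B 2 := by
    rw [← sub_nonneg, Algebra.algebraMap_eq_smul_one, Algebra.algebraMap_eq_smul_one, ← sub_smul]
    exact smul_nonneg'' (by linarith) hone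
  have h4 : algebraMap ℝ B (2 : ℝ) = (2 : B) := map_ofNat (algebraMap ℝ B) 2
  rw [sub_nonneg, ← h4]
  exact h1.trans h3

lemma transform_exists [PartialOrder B] [StarOrderedRing B] [Nontrivial B] {e : B}
    (he : ‖e‖ ≤ 1) {s : ℝ} (h0 : 0 < s) (h1 : s < 1) :
    ∃ u : B, (∀ J : Set B, IsClosedSubalg J → e ∈ J → u ∈ J) ∧ ‖u‖ ≤ 1 ∧
      ‖(1 : B) - u‖ ≤ s⁻¹ ∧ ∀ y : B, ‖u * y - y‖ ≤ (1 - s)⁻¹ * ‖y - e * y‖ := by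
  set x : B := s • e with hxdef
  have hx : ‖x‖ < 1 := by
    rw [hxdef, norm_smul, Real.norm_eq_abs, abs_of_pos h0]
    nlinarith [norm_nonneg e]
  set U : Bˣ := Units.oneSub x hx with hUdef
  set W : B := ((U⁻¹ : Bˣ) : B) with hWdef
  have hUval : (U : B) = 1 - x := rfl
  have h1W : (1 - x) * W = 1 := by rw [← hUval, hWdef]; exact U.mul_inv
  have hW1 : W * (1 - x) = 1 := by rw [← hUval, hWdef]; exact U.inv_mul
  have hWsum : W = ∑' n : ℕ, x ^ n := rfl
  -- commutation
  have hcomm : Commute e W := by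
    have h : Commute e ((U : Bˣ) : B) := by
      rw [hUval]
      exact (Commute.one_right e).sub_right ((Commute.refl e).smul_right s)
    exact h.units_inv_right
  -- norm of W
  have hWnorm : ‖W‖ ≤ (1 - s)⁻¹ := by
    rw [hWsum]
    refine le_trans (tsum_geometric_le_of_norm_lt_one x hx) ?_
    rw [norm_one]
    have hxs : ‖x‖ ≤ s := by
      rw [hxdef, norm_smul, Real.norm_eq_abs, abs_of_pos h0]
      nlinarith [norm_nonneg e]
    have : (1 - ‖x‖)⁻¹ ≤ (1 - s)⁻¹ := by
      apply inv_anti₀ (by linarith) (by linarith)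
    linarith
  set u : B := (1 - s) • (e * W) with hudef
  -- 1 - u = (1 - e) * W
  have hkey : (1 : B) - u = (1 - e) * W := by
    have hexp : W - s • (e * W) = 1 := by
      have := h1W
      rwa [sub_mul, one_mul, hxdef, smul_mul_assoc] at this
    rw [hudef]
    rw [sub_mul, one_mul]
    calc (1 : B) - (1 - s) • (e * W)
        = (W - s • (e * W)) - (1 - s) • (e * W) := by rw [hexp]
      _ = W - e * W := by rw [sub_smul, one_smul]; abel
  refine ⟨u, ?_, ?_, ?_, ?_⟩
  · -- membership
    intro J hJ heJ
    have hterm : ∀ n : ℕ, e * x ^ n ∈ J := by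
      intro n
      have : e * x ^ n = (s ^ n) • e ^ (n + 1) := by
        rw [hxdef, smul_pow, mul_smul_comm, pow_succ']
      rw [this]
      exact real_smul_mem hJ (pow_mem_subalg hJ heJ n) _
    have hsum : HasSum (fun n : ℕ => e * x ^ n) (e * W) := by
      rw [hWsum]
      exact ((summable_geometric_of_norm_lt_one hx).hasSum).mul_left e
    have hmem : e * W ∈ J := by
      refine hJ.1.mem_of_tendsto hsum (Eventually.of_forall fun F => ?_)
      refine Finset.sum_induction _ (· ∈ J) (fun a b ha hb => hJ.2.2.1 a ha b hb) hJ.2.1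
        fun i _ => hterm i
    exact real_smul_mem hJ hmem _
  · -- norm of u
    rw [hudef, norm_smul, Real.norm_eq_abs, abs_of_pos (by linarith)]
    have h1s : (0:ℝ) < 1 - s := by linarith
    have hmul := norm_mul_le e W
    have hEW : ‖e * W‖ ≤ (1 - s)⁻¹ := by nlinarith [norm_nonneg W, norm_nonneg e]
    have hcancel : (1 - s) * (1 - s)⁻¹ = 1 := mul_inv_cancel₀ (ne_of_gt h1s)
    nlinarith [norm_nonneg (e * W)]
  · -- norm of 1 - u
    rw [hkey]
    -- C*-estimate
    have hP : 0 ≤ (2 : B) - (e + star e) := two_sub_add_star_nonneg he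
    have hb : 0 ≤ ((1 - s)^2) • (1 : B) + (s * (1 - s)) • ((2 : B) - (e + star e)) := by
      have hone : (0 : B) ≤ 1 := by simpa using star_mul_self_nonneg (1 : B)
      have ha1 := smul_nonneg'' (r := (1-s)^2) (by positivity) hone
      have ha2 := smul_nonneg'' (r := s * (1-s)) (by nlinarith) hP
      exact add_nonneg ha1 ha2
    -- key algebraic identity
    have hKI : star (1 - x) * (1 - x) =
        (s^2) • (star (1 - e) * (1 - e)) +
          (((1 - s)^2) • (1 : B) + (s * (1 - s)) • ((2 : B) - (e + star e))) := by
      rw [hxdef, show ((2 : B)) = (1 : B) + 1 from one_add_one_eq_two.symm]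
      simp only [star_sub, star_smul, star_one, star_trivial, sub_mul, mul_sub, one_mul, mul_one,
        smul_mul_assoc, mul_smul_comm, smul_smul, smul_sub, smul_add]
      module
    -- conjugate by W
    have hconj : star W * (star (1 - x) * (1 - x)) * W = 1 := by
      have h : star W * (star (1 - x) * (1 - x)) * W
          = star ((1 - x) * W) * ((1 - x) * W) := by
        simp only [star_mul, mul_assoc]
      rw [h, h1W, star_one, one_mul]
    have hsplit : star W * (star (1 - x) * (1 - x)) * W
        = (s^2) • (star W * (star (1 - e) * (1 - e)) * W)
          + star W * (((1 - s)^2) • (1 : B) + (s * (1 - s)) • ((2 : B) - (e + star e))) * W := by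
      rw [hKI]
      simp only [mul_add, add_mul, mul_smul_comm, smul_mul_assoc]
    have hconj2 : (s^2) • (star W * (star (1 - e) * (1 - e)) * W)
        + star W * (((1 - s)^2) • (1 : B) + (s * (1 - s)) • ((2 : B) - (e + star e))) * W
        = 1 := by rw [← hsplit]; exact hconj
    have hle : (s^2) • (star W * (star (1 - e) * (1 - e)) * W) ≤ 1 := by
      have h := le_add_of_nonneg_right (a := (s^2) • (star W * (star (1 - e) * (1 - e)) * W))
        (star_left_conjugate_nonneg hb W)
      rwa [hconj2] at h
    have hnn : 0 ≤ (s^2) • (star W * (star (1 - e) * (1 - e)) * W) :=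
      smul_nonneg'' (by positivity) (star_left_conjugate_nonneg (star_mul_self_nonneg _) W)
    have hnormle : ‖(s^2) • (star W * (star (1 - e) * (1 - e)) * W)‖ ≤ 1 := by
      have := CStarAlgebra.norm_le_norm_of_nonneg_of_le hnn hle
      rwa [norm_one] at this
    have heq : star W * (star (1 - e) * (1 - e)) * W
        = star ((1 - e) * W) * ((1 - e) * W) := by
      simp only [star_mul, mul_assoc]
    rw [heq, norm_smul, Real.norm_eq_abs, abs_of_pos (by positivity),
      CStarRing.norm_star_mul_self] at hnormle
    set t := ‖(1 - e) * W‖ with htdef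
    have ht : 0 ≤ t := norm_nonneg _
    have hst : s * t ≤ 1 := by nlinarith [sq_nonneg (s * t - 1)]
    rw [inv_eq_one_div, le_div_iff₀ h0]
    nlinarith
  · -- approximate identity estimate
    intro y
    have h1 : u * y - y = -(W * (y - e * y)) := by
      have hc : (1 - e) * W = W * (1 - e) :=
        (Commute.sub_left (Commute.one_left W) hcomm)
      have : (1 : B) - u = W * (1 - e) := by rw [hkey, hc]
      calc u * y - y = -(((1:B) - u) * y) := by rw [sub_mul, one_mul]; abel
        _ = -(W * (1 - e) * y) := by rw [this]
        _ = -(W * (y - e * y)) := by rw [mul_assoc, sub_mul, one_mul]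
    rw [h1, norm_neg]
    calc ‖W * (y - e * y)‖ ≤ ‖W‖ * ‖y - e * y‖ := norm_mul_le _ _
      _ ≤ (1 - s)⁻¹ * ‖y - e * y‖ := by
          have := norm_nonneg (y - e * y)
          nlinarith

lemma one_le_norm_one_sub {J : Set B} (hJ : IsClosedSubalg J) (h1 : (1 : B) ∉ J) {u : B}
    (hu : u ∈ J) : 1 ≤ ‖(1 : B) - u‖ := by
  by_contra hlt
  push_neg at hlt
  -- partial geometric series
  have hneg : ∀ z ∈ J, -z ∈ J := by
    intro z hz
    have := hJ.2.2.2.1 (-1 : ℂ) z hz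
    simpa using this
  set p : ℕ → B := fun N => 1 - (1 - u) ^ (N + 1) with hp
  have hpmem : ∀ N, p N ∈ J := by
    intro N
    induction N with
    | zero => simpa [hp] using hu
    | succ N ih =>
      have c : u * (1 - u) ^ (N + 1) = (1 - u) ^ (N + 1) * u :=
        (((Commute.one_right u).sub_right (Commute.refl u)).pow_right (N + 1)).eq
      have expand1 : p (N + 1) = 1 - (1 - u) ^ (N + 1) + (1 - u) ^ (N + 1) * u := by
        show 1 - (1 - u) ^ (N + 1 + 1) = _
        rw [pow_succ, mul_sub, mul_one]
        abel
      have expand2 : p N + (u + -(u * p N)) = 1 - (1 - u) ^ (N + 1) + u * (1 - u) ^ (N + 1) := by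
        show (1 - (1 - u) ^ (N + 1)) + (u + -(u * (1 - (1 - u) ^ (N + 1)))) = _
        rw [mul_sub, mul_one]
        abel
      have heq : p (N + 1) = p N + (u + -(u * p N)) := by
        rw [expand1, expand2, c]
      rw [heq]
      exact hJ.2.2.1 _ ih _ (hJ.2.2.1 _ hu _ (hneg _ (hJ.2.2.2.2 _ hu _ ih)))
  have htends : Tendsto p atTop (𝓝 (1 : B)) := by
    rw [tendsto_iff_norm_sub_tendsto_zero]
    have hb : ∀ N : ℕ, ‖p N - 1‖ ≤ ‖1 - u‖ ^ (N + 1) := by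
      intro N
      have h : p N - 1 = -((1 - u) ^ (N + 1)) := by
        show (1 - (1 - u) ^ (N + 1)) - 1 = _
        abel
      rw [h, norm_neg]
      exact norm_pow_le' _ (Nat.succ_pos N)
    refine squeeze_zero' (Eventually.of_forall fun N => norm_nonneg _)
      (Eventually.of_forall hb) ?_
    have := tendsto_pow_atTop_nhds_zero_of_lt_one (norm_nonneg (1 - u)) hlt
    exact this.comp (tendsto_add_atTop_nat 1)
  exact h1 (hJ.1.mem_of_tendsto htends (Eventually.of_forall hpmem))

end Aux

theorem exists_left_ai_norm_tendsto_one' {B : Type*} [CStarAlgebra B]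
    (J : Set B) (hJ : IsClosedSubalg J)
    (hnonunital : ¬ ∃ e ∈ J, ∀ x ∈ J, e * x = x ∧ x * e = x)
    (hcai : ∃ (ι : Type) (_ : Preorder ι) (_ : IsDirected ι (· ≤ ·)) (_ : Nonempty ι) (e : ι → B),
      (∀ t, e t ∈ J) ∧ (∀ t, ‖e t‖ ≤ 1) ∧
      ∀ x ∈ J, Tendsto (fun t => e t * x) atTop (𝓝 x)) :
    ∃ (ι : Type) (_ : Preorder ι) (_ : IsDirected ι (· ≤ ·)) (_ : Nonempty ι) (u : ι → B),
      (∀ t, u t ∈ J) ∧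
      (∀ x ∈ J, Tendsto (fun t => u t * x) atTop (𝓝 x)) ∧
      Tendsto (fun t => ‖u t‖) atTop (𝓝 1) ∧
      Tendsto (fun t => ‖(1 : B) - u t‖) atTop (𝓝 1) := by
  classical
  obtain ⟨ι₀, pre₀, dir₀, ne₀, e, heJ, henorm, hconv⟩ := hcai
  letI := pre₀
  haveI := dir₀
  haveI := ne₀
  have hy₀ : ∃ y₀ ∈ J, y₀ ≠ (0 : B) := by
    by_contra h
    push_neg at h
    exact hnonunital ⟨0, hJ.2.1, fun x hx => by rw [h x hx]; simp⟩
  obtain ⟨y₀, hy₀J, hy₀ne⟩ := hy₀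
  haveI : Nontrivial B := ⟨⟨y₀, 0, hy₀ne⟩⟩
  letI : PartialOrder B := CStarAlgebra.spectralOrder B
  haveI : StarOrderedRing B := CStarAlgebra.spectralOrderedRing B
  have hone : (1 : B) ∉ J := fun h1 =>
    hnonunital ⟨1, h1, fun x _ => ⟨one_mul x, mul_one x⟩⟩
  set s : ℕ → ℝ := fun n => 1 - ((n : ℝ) + 2)⁻¹ with hsdef
  have hn2 : ∀ n : ℕ, (0:ℝ) < ((n : ℝ) + 2)⁻¹ := fun n => by positivity
  have hn2' : ∀ n : ℕ, ((n : ℝ) + 2)⁻¹ ≤ 2⁻¹ := fun n => by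
    apply inv_anti₀ (by norm_num); simp
  have hs0 : ∀ n, 0 < s n := fun n => by
    have := hn2' n; simp only [hsdef]; norm_num at this ⊢; linarith
  have hs1 : ∀ n, s n < 1 := fun n => by
    have := hn2 n; simp only [hsdef]; linarith
  have hsub : ∀ n, 1 - s n = ((n : ℝ) + 2)⁻¹ := fun n => by simp [hsdef]
  -- eventual thresholds for each element of J
  have hthr : ∀ y ∈ J, ∃ g : ℕ → ι₀, ∀ k : ℕ, ∀ τ : ι₀, g k ≤ τ →
      ‖y - e τ * y‖ ≤ ((k : ℝ) + 2)⁻¹ * ((k : ℝ) + 2)⁻¹ := by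
    intro y hy
    have h : ∀ k : ℕ, ∃ a : ι₀, ∀ τ ≥ a,
        ‖y - e τ * y‖ ≤ ((k : ℝ) + 2)⁻¹ * ((k : ℝ) + 2)⁻¹ := by
      intro k
      have hδ : 0 < ((k : ℝ) + 2)⁻¹ * ((k : ℝ) + 2)⁻¹ := by positivity
      have hev : ∀ᶠ τ in (atTop : Filter ι₀),
          ‖y - e τ * y‖ ≤ ((k : ℝ) + 2)⁻¹ * ((k : ℝ) + 2)⁻¹ := by
        filter_upwards [Metric.tendsto_nhds.mp (hconv y hy) _ hδ] with τ hτ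
        rw [dist_eq_norm] at hτ
        rw [norm_sub_rev]
        exact le_of_lt hτ
      exact eventually_atTop.mp hev
    choose g hg using h
    exact ⟨g, hg⟩
  -- the directed index type
  haveI hdirD : IsDirected (ℕ × (ℕ → ι₀)) (· ≤ ·) := by
    constructor
    intro a b
    have h : ∀ k : ℕ, ∃ z : ι₀, a.2 k ≤ z ∧ b.2 k ≤ z := fun k =>
      directed_of (· ≤ ·) (a.2 k) (b.2 k)
    choose z hz1 hz2 using h
    exact ⟨(max a.1 b.1, z), ⟨le_max_left _ _, fun k => hz1 k⟩,
      ⟨le_max_right _ _, fun k => hz2 k⟩⟩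
  have htrans : ∀ i : ℕ × (ℕ → ι₀), ∃ u : B, u ∈ J ∧ ‖u‖ ≤ 1 ∧
      ‖(1 : B) - u‖ ≤ (s i.1)⁻¹ ∧
      ∀ y : B, ‖u * y - y‖ ≤ (1 - s i.1)⁻¹ * ‖y - e (i.2 i.1) * y‖ := by
    intro i
    obtain ⟨u, humem, h1, h2, h3⟩ :=
      transform_exists (henorm (i.2 i.1)) (hs0 i.1) (hs1 i.1)
    exact ⟨u, humem J hJ (heJ _), h1, h2, h3⟩
  choose u humem hunorm huone huconv using htrans
  -- eventual bound
  have hbound : ∀ y ∈ J, ∀ g : ℕ → ι₀,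
      (∀ k : ℕ, ∀ τ : ι₀, g k ≤ τ → ‖y - e τ * y‖ ≤ ((k : ℝ) + 2)⁻¹ * ((k : ℝ) + 2)⁻¹) →
      ∀ i : ℕ × (ℕ → ι₀), g ≤ i.2 → ‖u i * y - y‖ ≤ ((i.1 : ℝ) + 2)⁻¹ := by
    intro y hy g hg i hgi
    have h2 : ‖y - e (i.2 i.1) * y‖ ≤ ((i.1 : ℝ) + 2)⁻¹ * ((i.1 : ℝ) + 2)⁻¹ :=
      hg i.1 (i.2 i.1) (hgi i.1)
    have h3 : (0:ℝ) ≤ (1 - s i.1)⁻¹ := by rw [hsub]; positivity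
    calc ‖u i * y - y‖ ≤ (1 - s i.1)⁻¹ * ‖y - e (i.2 i.1) * y‖ := huconv i y
      _ ≤ (1 - s i.1)⁻¹ * (((i.1 : ℝ) + 2)⁻¹ * ((i.1 : ℝ) + 2)⁻¹) :=
          mul_le_mul_of_nonneg_left h2 h3
      _ = ((i.1 : ℝ) + 2)⁻¹ := by
          rw [hsub i.1, inv_inv, ← mul_assoc, mul_inv_cancel₀ (ne_of_gt (by positivity)), one_mul]
  have hev_mem : ∀ g : ℕ → ι₀, ∀ᶠ i : ℕ × (ℕ → ι₀) in atTop, g ≤ i.2 := by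
    intro g
    exact eventually_atTop.mpr ⟨(0, g), fun i hi => hi.2⟩
  have hfst : Tendsto (Prod.fst : ℕ × (ℕ → ι₀) → ℕ) atTop atTop :=
    tendsto_atTop.mpr fun N =>
      eventually_atTop.mpr ⟨(N, fun _ => Classical.arbitrary ι₀), fun i hi => hi.1⟩
  have hδ0 : Tendsto (fun i : ℕ × (ℕ → ι₀) => ((i.1 : ℝ) + 2)⁻¹) atTop (𝓝 0) := by
    apply tendsto_inv_atTop_zero.comp
    exact tendsto_atTop_add_const_right _ 2 (tendsto_natCast_atTop_atTop.comp hfst)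
  refine ⟨ℕ × (ℕ → ι₀), inferInstance, hdirD, inferInstance, u, humem, ?_, ?_, ?_⟩
  · intro y hyJ
    obtain ⟨g, hg⟩ := hthr y hyJ
    rw [tendsto_iff_norm_sub_tendsto_zero]
    refine squeeze_zero' (Eventually.of_forall fun i => norm_nonneg _) ?_ hδ0
    filter_upwards [hev_mem g] with i hi
    exact hbound y hyJ g hg i hi
  · have hny : (0:ℝ) < ‖y₀‖ := norm_pos_iff.mpr hy₀ne
    obtain ⟨g₀, hg₀⟩ := hthr y₀ hy₀J
    refine tendsto_of_tendsto_of_tendsto_of_le_of_le'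
      (g := fun i : ℕ × (ℕ → ι₀) => 1 - ((i.1 : ℝ) + 2)⁻¹ / ‖y₀‖) (h := fun _ => 1)
      ?_ tendsto_const_nhds ?_ (Eventually.of_forall fun i => hunorm i)
    · have hc : Tendsto (fun _ : ℕ × (ℕ → ι₀) => (1:ℝ)) atTop (𝓝 1) := tendsto_const_nhds
      simpa using hc.sub (hδ0.div_const ‖y₀‖)
    · filter_upwards [hev_mem g₀] with i hi
      have hb := hbound y₀ hy₀J g₀ hg₀ i hi
      have h5 : ‖y₀‖ - ((i.1 : ℝ) + 2)⁻¹ ≤ ‖u i * y₀‖ := by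
        have := norm_sub_norm_le y₀ (u i * y₀)
        rw [norm_sub_rev (u i * y₀) y₀] at hb
        linarith
      have h6 := norm_mul_le (u i) y₀
      rw [← mul_le_mul_iff_of_pos_right hny]
      have h7 : (1 - ((i.1 : ℝ) + 2)⁻¹ / ‖y₀‖) * ‖y₀‖ = ‖y₀‖ - ((i.1 : ℝ) + 2)⁻¹ := by
        field_simp
      rw [h7]
      nlinarith
  · refine tendsto_of_tendsto_of_tendsto_of_le_of_le'
      (g := fun _ : ℕ × (ℕ → ι₀) => (1:ℝ)) (h := fun i : ℕ × (ℕ → ι₀) => (s i.1)⁻¹)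
      tendsto_const_nhds ?_
      (Eventually.of_forall fun i => one_le_norm_one_sub hJ hone (humem i))
      (Eventually.of_forall fun i => huone i)
    have h8 : Tendsto (fun i : ℕ × (ℕ → ι₀) => (1 - ((i.1 : ℝ) + 2)⁻¹)⁻¹) atTop (𝓝 1) := by
      have h9 : Tendsto (fun i : ℕ × (ℕ → ι₀) => 1 - ((i.1 : ℝ) + 2)⁻¹) atTop (𝓝 1) := by
        have hc : Tendsto (fun _ : ℕ × (ℕ → ι₀) => (1:ℝ)) atTop (𝓝 1) := tendsto_const_nhds
        simpa using hc.sub hδ0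
      simpa using h9.inv₀ (by norm_num)
    simpa [hsdef] using h8

/-- If `J` is a nonunital closed subalgebra of a unital C*-algebra
possessing a left contractive approximate identity, then `J` has a left approximate
identity `(u_t)` with `‖u_t‖ → 1` and `‖1 - u_t‖ → 1`. -/
theorem exists_left_ai_norm_tendsto_one {B : Type*} [CStarAlgebra B]
    (J : Set B) (hJ : IsClosedSubalg J)
    (hnonunital : ¬ ∃ e ∈ J, ∀ x ∈ J, e * x = x ∧ x * e = x)
    (hcai : HasLeftCai J) :
    ∃ (ι : Type) (_ : Preorder ι) (_ : IsDirected ι (· ≤ ·)) (_ : Nonempty ι) (u : ι → B),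
      (∀ t, u t ∈ J) ∧
      (∀ x ∈ J, Tendsto (fun t => u t * x) atTop (𝓝 x)) ∧
      Tendsto (fun t => ‖u t‖) atTop (𝓝 1) ∧
      Tendsto (fun t => ‖(1 : B) - u t‖) atTop (𝓝 1) := by
  exact exists_left_ai_norm_tendsto_one' J hJ hnonunital hcai
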